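/- For the two-layer minimalist model with N ≥ 2 and batch size 1 ≤ B ≤ N, let θ = (u, v₁) be any parameter, let P ∈ ℝ^{N×N} be a random diagonal matrix with exactly B diagonal entries equal to 1 (the set of these entries uniformly distributed over all B-element subsets of {1,…,N}) and the rest 0, and define the one-step SGD iterate θ⁺_SGD = (u − (η/B)XᵀPz(θ)v₁, v₁ − (η/B)z(θ)ᵀPXu) and the GD iterate θ⁺_GD = (u − (η/N)Xᵀz(θ)v₁, v₁ − (η/N)z(θ)ᵀXu), with step size η > 0. Then E_P[C(θ⁺_SGD)] − C(θ⁺_GD) = (η²(N−B))/(B N²(N−1)) · [−(Ψ₂(θ) − Ψ₁(θ))·C(θ) + (Ω₂(θ) − Ω₁(θ))], where Ψ₁(θ) = Σ_{i=1}^r σ_i²(z(θ)ᵀe_i)², Ψ₂(θ) = N·Σ_{i=1}^r σ_i²‖z(θ)⊙e_i‖², Ω₁(θ) = Σ_{1≤i<j≤r} [σ_i(z(θ)ᵀe_i)o_j − σ_j(z(θ)ᵀe_j)o_i]², and Ω₂(θ) = N·Σ_{1≤i<j≤r} ‖σ_i(z(θ)⊙e_i)o_j − σ_j(z(θ)⊙e_j)o_i‖²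 (⊙ denoting the elementwise product of vectors in ℝ^N). -/

import Mathlib

open scoped BigOperators ENNReal
open MeasureTheory

lemma integral_comp_fintype {Ω : Type*} [MeasurableSpace Ω] (μ : Measure Ω) [IsFiniteMeasure μ]
    {γ : Type*} [Fintype γ] [DecidableEq γ] (s : Ω → γ)
    (hmeas : ∀ a, MeasurableSet {ω | s ω = a}) (g : γ → ℝ) :
    ∫ ω, g (s ω) ∂μ = ∑ a, (μ {ω | s ω = a}).toReal * g a := by
  have h : ∀ ω, g (s ω) = ∑ a, Set.indicator {ω' | s ω' = a} (fun _ => g a) ω := by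
    intro ω
    rw [Finset.sum_eq_single (s ω)]
    · rw [Set.indicator_of_mem]; exact rfl
    · intro b _ hb
      apply Set.indicator_of_notMem
      simpa using fun hh => hb hh.symm
    · simp
  simp_rw [h]
  rw [integral_finset_sum]
  · refine Finset.sum_congr rfl fun a _ => ?_
    rw [integral_indicator_const _ (hmeas a)]
    simp [mul_comm, measureReal_def]
  · intro a _
    exact (integrable_indicator_iff (hmeas a)).2
      (integrableOn_const (measure_lt_top μ _).ne)

lemma count_single (N B : ℕ) (hB1 : 1 ≤ B) (n : Fin N) :
    (((Finset.powersetCard B (Finset.univ : Finset (Fin N)))).filter (fun A => n ∈ A)).card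
      = (N - 1).choose (B - 1) := by
  have hcard : (Finset.powersetCard (B-1) (Finset.univ.erase n)).card = (N-1).choose (B-1) := by
    rw [Finset.card_powersetCard, Finset.card_erase_of_mem (Finset.mem_univ n),
      Finset.card_univ, Fintype.card_fin]
  rw [← hcard]
  refine Finset.card_bij' (fun A _ => A.erase n) (fun S _ => insert n S) ?_ ?_ ?_ ?_
  · intro A hA
    simp only [Finset.mem_filter, Finset.mem_powersetCard_univ] at hA
    rw [Finset.mem_powersetCard]
    exact ⟨Finset.erase_subset_erase n (Finset.subset_univ A),
      by rw [Finset.card_erase_of_mem hA.2, hA.1]⟩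
  · intro S hS
    rw [Finset.mem_powersetCard] at hS
    have hnS : n ∉ S := fun h => (Finset.mem_erase.1 (hS.1 h)).1 rfl
    simp only [Finset.mem_filter, Finset.mem_powersetCard_univ]
    constructor
    · rw [Finset.card_insert_of_notMem hnS, hS.2]; omega
    · exact Finset.mem_insert_self n S
  · intro A hA
    simp only [Finset.mem_filter] at hA
    exact Finset.insert_erase hA.2
  · intro S hS
    rw [Finset.mem_powersetCard] at hS
    exact Finset.erase_insert (fun h => (Finset.mem_erase.1 (hS.1 h)).1 rfl)

lemma count_pair (N B : ℕ) (hB2 : 2 ≤ B) (n m : Fin N) (hnm : n ≠ m) :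
    (((Finset.powersetCard B (Finset.univ : Finset (Fin N)))).filter
        (fun A => n ∈ A ∧ m ∈ A)).card = (N - 2).choose (B - 2) := by
  have hcard : (Finset.powersetCard (B-2) ((Finset.univ.erase n).erase m)).card
      = (N-2).choose (B-2) := by
    rw [Finset.card_powersetCard, Finset.card_erase_of_mem
      (Finset.mem_erase.2 ⟨hnm.symm, Finset.mem_univ m⟩),
      Finset.card_erase_of_mem (Finset.mem_univ n), Finset.card_univ, Fintype.card_fin]
    congr 1
  rw [← hcard]
  refine Finset.card_bij' (fun A _ => (A.erase n).erase m) (fun S _ => insert n (insert m S))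
    ?_ ?_ ?_ ?_
  · intro A hA
    simp only [Finset.mem_filter, Finset.mem_powersetCard_univ] at hA
    rw [Finset.mem_powersetCard]
    refine ⟨Finset.erase_subset_erase m (Finset.erase_subset_erase n (Finset.subset_univ A)), ?_⟩
    rw [Finset.card_erase_of_mem (Finset.mem_erase.2 ⟨hnm.symm, hA.2.2⟩),
      Finset.card_erase_of_mem hA.2.1, hA.1]
    omega
  · intro S hS
    rw [Finset.mem_powersetCard] at hS
    have hmS : m ∉ S := fun h => (Finset.mem_erase.1 (hS.1 h)).1 rfl
    have hnS : n ∉ insert m S := by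
      simp only [Finset.mem_insert]
      rintro (h | h)
      · exact hnm h
      · exact (Finset.mem_erase.1 (Finset.mem_erase.1 (hS.1 h)).2).1 rfl
    simp only [Finset.mem_filter, Finset.mem_powersetCard_univ]
    refine ⟨?_, Finset.mem_insert_self n _, Finset.mem_insert_of_mem (Finset.mem_insert_self m S)⟩
    rw [Finset.card_insert_of_notMem hnS, Finset.card_insert_of_notMem hmS, hS.2]; omega
  · intro A hA
    simp only [Finset.mem_filter] at hA
    have hmA : m ∈ A.erase n := Finset.mem_erase.2 ⟨hnm.symm, hA.2.2⟩
    show insert n (insert m ((A.erase n).erase m)) = A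
    rw [Finset.insert_erase hmA, Finset.insert_erase hA.2.1]
  · intro S hS
    rw [Finset.mem_powersetCard] at hS
    have hmS : m ∉ S := fun h => (Finset.mem_erase.1 (hS.1 h)).1 rfl
    have hnS : n ∉ insert m S := by
      simp only [Finset.mem_insert]
      rintro (h | h)
      · exact hnm h
      · exact (Finset.mem_erase.1 (Finset.mem_erase.1 (hS.1 h)).2).1 rfl
    show ((insert n (insert m S)).erase n).erase m = S
    rw [Finset.erase_insert hnS, Finset.erase_insert hmS]

lemma choose_id1 (N B : ℕ) (hB1 : 1 ≤ B) (hN1 : 1 ≤ N) :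
    N.choose B * B = N * (N - 1).choose (B - 1) := by
  obtain ⟨N', rfl⟩ : ∃ N', N = N' + 1 := ⟨N - 1, by omega⟩
  obtain ⟨B', rfl⟩ : ∃ B', B = B' + 1 := ⟨B - 1, by omega⟩
  simpa [Nat.mul_comm] using (Nat.add_one_mul_choose_eq N' B').symm

lemma count_pair_eq (N B : ℕ) (hN : 2 ≤ N) (hB1 : 1 ≤ B) (hBN : B ≤ N)
    (n m : Fin N) (hnm : n ≠ m) :
    (((Finset.powersetCard B (Finset.univ : Finset (Fin N)))).filter
        (fun A => n ∈ A ∧ m ∈ A)).card * (N * (N - 1))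
      = N.choose B * (B * (B - 1)) := by
  rcases Nat.lt_or_ge B 2 with hB | hB
  · have hB1' : B = 1 := by omega
    subst hB1'
    have : (((Finset.powersetCard 1 (Finset.univ : Finset (Fin N)))).filter
        (fun A => n ∈ A ∧ m ∈ A)) = ∅ := by
      rw [Finset.filter_eq_empty_iff]
      intro A hA
      rw [Finset.mem_powersetCard_univ] at hA
      rintro ⟨h1, h2⟩
      exact hnm (Finset.card_le_one.1 (le_of_eq hA) n h1 m h2)
    simp [this]
  · rw [count_pair N B hB n m hnm]
    have h1 := choose_id1 N B hB1 (by omega)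
    have h2 := choose_id1 (N-1) (B-1) (by omega) (by omega)
    have e1 : N - 1 - 1 = N - 2 := by omega
    have e2 : B - 1 - 1 = B - 2 := by omega
    rw [e1, e2] at h2
    calc (N-2).choose (B-2) * (N * (N-1)) = N * ((N-1) * (N-2).choose (B-2)) := by ring
    _ = N * ((N-1).choose (B-1) * (B-1)) := by rw [h2]
    _ = (N * (N-1).choose (B-1)) * (B-1) := by ring
    _ = (N.choose B * B) * (B - 1) := by rw [h1]
    _ = N.choose B * (B * (B-1)) := by ring

lemma sum_powersetCard_mul (N B : ℕ) (p q : Fin N → ℝ) :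
    ∑ A ∈ Finset.powersetCard B (Finset.univ : Finset (Fin N)),
        (∑ n ∈ A, p n) * (∑ m ∈ A, q m)
      = ∑ n, ∑ m, (((Finset.powersetCard B (Finset.univ : Finset (Fin N))).filter
          (fun A => n ∈ A ∧ m ∈ A)).card : ℝ) * (p n * q m) := by
  have h1 : ∀ A : Finset (Fin N), (∑ n ∈ A, p n) * (∑ m ∈ A, q m)
      = ∑ n, ∑ m, (if n ∈ A ∧ m ∈ A then p n * q m else 0) := by
    intro A
    rw [show (∑ n ∈ A, p n) = ∑ n, (if n ∈ A then p n else 0) by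
      rw [Finset.sum_ite_mem, Finset.univ_inter]]
    rw [show (∑ m ∈ A, q m) = ∑ m, (if m ∈ A then q m else 0) by
      rw [Finset.sum_ite_mem, Finset.univ_inter]]
    rw [Finset.sum_mul_sum]
    refine Finset.sum_congr rfl fun n _ => Finset.sum_congr rfl fun m _ => ?_
    by_cases hn : n ∈ A <;> by_cases hm : m ∈ A <;> simp [hn, hm]
  simp_rw [h1]
  rw [Finset.sum_comm]
  refine Finset.sum_congr rfl fun n _ => ?_
  rw [Finset.sum_comm]
  refine Finset.sum_congr rfl fun m _ => ?_
  rw [← Finset.sum_filter, Finset.sum_const, nsmul_eq_mul]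

lemma lagrange_id {r : ℕ} (a b : Fin r → ℝ) :
    ∑ i, ∑ j, (if i < j then (a i * b j - a j * b i) ^ 2 else 0)
      = (∑ i, (a i) ^ 2) * (∑ i, (b i) ^ 2) - (∑ i, a i * b i) ^ 2 := by
  have key : ∑ i, ∑ j, (a i * b j - a j * b i) ^ 2
      = 2 * ((∑ i, (a i) ^ 2) * (∑ i, (b i) ^ 2) - (∑ i, a i * b i) ^ 2) := by
    have hrow : ∀ i, ∑ j, (a i * b j - a j * b i) ^ 2
        = (∑ j, (a i)^2 * (b j)^2) + (∑ j, (a j)^2 * (b i)^2)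
          - 2 * (∑ j, (a i * b i) * (a j * b j)) := by
      intro i
      rw [Finset.mul_sum, ← Finset.sum_add_distrib, ← Finset.sum_sub_distrib]
      exact Finset.sum_congr rfl fun j _ => by ring
    rw [Finset.sum_congr rfl fun i _ => hrow i]
    rw [Finset.sum_sub_distrib, Finset.sum_add_distrib]
    have e1 : ∑ i, ∑ j, (a i)^2 * (b j)^2 = (∑ i, (a i)^2) * (∑ i, (b i)^2) := by
      rw [Finset.sum_mul_sum]
    have e2 : ∑ i : Fin r, ∑ j, (a j)^2 * (b i)^2 = (∑ i, (a i)^2) * (∑ i, (b i)^2) := by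
      rw [Finset.sum_comm, Finset.sum_mul_sum]
    have e3 : ∑ i, ∑ j, (a i * b i) * (a j * b j) = (∑ i, a i * b i) ^ 2 := by
      rw [sq, Finset.sum_mul_sum]
    have e4 : ∑ i : Fin r, 2 * (∑ j, (a i * b i) * (a j * b j))
        = 2 * ((∑ i, a i * b i) ^ 2) := by
      rw [← Finset.mul_sum, e3]
    rw [e1, e2, e4]
    ring
  have split : ∀ i j : Fin r, (a i * b j - a j * b i) ^ 2
      = (if i < j then (a i * b j - a j * b i) ^ 2 else 0)
        + (if j < i then (a i * b j - a j * b i) ^ 2 else 0) := by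
    intro i j
    rcases lt_trichotomy i j with h | h | h
    · simp [h, not_lt_of_gt h]
    · subst h; simp [lt_irrefl, sub_self]
    · simp [h, not_lt_of_gt h]
  have hsym : ∑ i, ∑ j, (if j < i then (a i * b j - a j * b i) ^ 2 else 0)
      = ∑ i, ∑ j, (if i < j then (a i * b j - a j * b i) ^ 2 else 0) := by
    rw [Finset.sum_comm]
    refine Finset.sum_congr rfl fun i _ => Finset.sum_congr rfl fun j _ => ?_
    congr 1
    ring
  have : ∑ i, ∑ j, (a i * b j - a j * b i) ^ 2
      = 2 * ∑ i, ∑ j, (if i < j then (a i * b j - a j * b i) ^ 2 else 0) := by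
    rw [Finset.sum_congr rfl fun i _ => Finset.sum_congr rfl fun j _ => split i j]
    rw [Finset.sum_congr rfl fun i (_ : i ∈ Finset.univ) => Finset.sum_add_distrib]
    rw [Finset.sum_add_distrib, hsym]
    ring
  have h2 := key
  rw [this] at h2
  linarith

set_option maxHeartbeats 2000000

/-- **Expected change of layer imbalance after one SGD step relative to GD (two-layer case):**
`E_P[C(θ⁺_SGD)] − C(θ⁺_GD) = (η²(N−B))/(BN²(N−1))·[−(Ψ₂−Ψ₁)C(θ) + (Ω₂−Ω₁)]`,
where the mini-batch is a uniformly random `B`-element subset of `{1,…,N}`. -/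
theorem two_layer_SGD_expected_imbalance_change
    (N dd r B : ℕ) (hN : 2 ≤ N) (hr : 0 < r) (hB1 : 1 ≤ B) (hBN : B ≤ N)
    (X : Matrix (Fin N) (Fin dd) ℝ)
    (σ : Fin r → ℝ) (e : Fin r → Fin N → ℝ) (w : Fin r → Fin dd → ℝ)
    (dc : Fin r → ℝ) (y : Fin N → ℝ)
    (hσpos : ∀ i, 0 < σ i)
    (hσdec : ∀ i j : Fin r, i ≤ j → σ j ≤ σ i)
    (he : ∀ i j : Fin r, ∑ n, e i n * e j n = if i = j then (1 : ℝ) else 0)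
    (hw : ∀ i j : Fin r, ∑ m, w i m * w j m = if i = j then (1 : ℝ) else 0)
    (hX : ∀ n m, X n m = ∑ i, σ i * e i n * w i m)
    (hrank : X.rank = r)
    (hy : ∀ n, y n = ∑ i, dc i * e i n)
    (η : ℝ) (hη : 0 < η)
    (u : Fin dd → ℝ) (v : ℝ)
    (z : Fin N → ℝ) (hz : ∀ n, z n = (∑ m, X n m * u m) * v - y n)
    (o : Fin r → ℝ) (ho : ∀ i, o i = ∑ m, w i m * u m)
    (Cθ : ℝ) (hCθ : Cθ = (∑ i, o i ^ 2) - v ^ 2)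
    (Ψ₁ : ℝ) (hΨ₁ : Ψ₁ = ∑ i, σ i ^ 2 * (∑ n, z n * e i n) ^ 2)
    (Ψ₂ : ℝ) (hΨ₂ : Ψ₂ = (N : ℝ) * ∑ i, σ i ^ 2 * ∑ n, (z n * e i n) ^ 2)
    (Ω₁ : ℝ) (hΩ₁ : Ω₁ = ∑ i, ∑ j, if i < j then
      (σ i * (∑ n, z n * e i n) * o j - σ j * (∑ n, z n * e j n) * o i) ^ 2 else 0)
    (Ω₂ : ℝ) (hΩ₂ : Ω₂ = (N : ℝ) * ∑ i, ∑ j, if i < j then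
      (∑ n, (σ i * (z n * e i n) * o j - σ j * (z n * e j n) * o i) ^ 2) else 0)
    -- one gradient descent step
    (uGD : Fin dd → ℝ)
    (huGD : ∀ m, uGD m = u m - (η / (N : ℝ)) * (∑ n, X n m * z n) * v)
    (vGD : ℝ)
    (hvGD : vGD = v - (η / (N : ℝ)) * ∑ n, z n * (∑ m, X n m * u m))
    -- the random mini-batch: a uniformly random `B`-element subset of the samples
    (Ω' : Type*) [MeasurableSpace Ω'] (μ : Measure Ω') [IsProbabilityMeasure μ]
    (s : Ω' → Finset (Fin N))
    (hcard : ∀ ω, (s ω).card = B)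
    (hmeasA : ∀ A : Finset (Fin N), MeasurableSet {ω | s ω = A})
    (hunif : ∀ A : Finset (Fin N), A.card = B →
      μ {ω | s ω = A} = ((N.choose B : ℝ≥0∞))⁻¹)
    -- one stochastic gradient descent step
    (uS : Ω' → Fin dd → ℝ)
    (huS : ∀ ω m, uS ω m
      = u m - (η / (B : ℝ)) * (∑ n, if n ∈ s ω then X n m * z n else 0) * v)
    (vS : Ω' → ℝ)
    (hvS : ∀ ω, vS ω
      = v - (η / (B : ℝ)) * ∑ n, if n ∈ s ω then z n * (∑ m, X n m * u m) else 0) :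
    (∫ ω, ((∑ i, (∑ m, w i m * uS ω m) ^ 2) - vS ω ^ 2) ∂μ)
        - ((∑ i, (∑ m, w i m * uGD m) ^ 2) - vGD ^ 2)
      = (η ^ 2 * ((N : ℝ) - (B : ℝ)))
          / ((B : ℝ) * (N : ℝ) ^ 2 * ((N : ℝ) - 1)) *
        (-((Ψ₂ - Ψ₁) * Cθ) + (Ω₂ - Ω₁)) := by
  classical
  have hNpos : (0:ℝ) < (N:ℝ) := by exact_mod_cast (by omega : 0 < N)
  have hN0 : (N:ℝ) ≠ 0 := ne_of_gt hNpos
  have hN1 : (N:ℝ) - 1 ≠ 0 := by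
    have : (2:ℝ) ≤ (N:ℝ) := by exact_mod_cast hN
    linarith
  have hB0 : (B:ℝ) ≠ 0 := by
    have : (0:ℝ) < (B:ℝ) := by exact_mod_cast hB1
    linarith
  have hCNBpos : 0 < N.choose B := Nat.choose_pos hBN
  -- basic structural lemmas
  have hwX : ∀ (i : Fin r) (n : Fin N), ∑ m, w i m * X n m = σ i * e i n := by
    intro i n
    calc ∑ m, w i m * X n m = ∑ m, ∑ j, w i m * (σ j * e j n * w j m) := by
          refine Finset.sum_congr rfl fun m _ => ?_
          rw [hX, Finset.mul_sum]
      _ = ∑ j, ∑ m, w i m * (σ j * e j n * w j m) := Finset.sum_comm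
      _ = ∑ j, σ j * e j n * (∑ m, w i m * w j m) := by
          refine Finset.sum_congr rfl fun j _ => ?_
          rw [Finset.mul_sum]
          exact Finset.sum_congr rfl fun m _ => by ring
      _ = σ i * e i n := by
          rw [Finset.sum_congr rfl fun j (_ : j ∈ Finset.univ) => by rw [hw i j]]
          simp
  have hXu : ∀ n, ∑ m, X n m * u m = ∑ j, σ j * e j n * o j := by
    intro n
    calc ∑ m, X n m * u m = ∑ m, ∑ j, σ j * e j n * w j m * u m := by
          refine Finset.sum_congr rfl fun m _ => ?_
          rw [hX, Finset.sum_mul]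
      _ = ∑ j, ∑ m, σ j * e j n * w j m * u m := Finset.sum_comm
      _ = ∑ j, σ j * e j n * o j := by
          refine Finset.sum_congr rfl fun j _ => ?_
          rw [ho, Finset.mul_sum]
          exact Finset.sum_congr rfl fun m _ => by ring
  have hsum2 : ∀ (i : Fin r) (A : Finset (Fin N)),
      ∑ m, w i m * (∑ n ∈ A, X n m * z n) = ∑ n ∈ A, σ i * e i n * z n := by
    intro i A
    calc ∑ m, w i m * (∑ n ∈ A, X n m * z n)
        = ∑ m, ∑ n ∈ A, w i m * (X n m * z n) := by
          exact Finset.sum_congr rfl fun m _ => by rw [Finset.mul_sum]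
      _ = ∑ n ∈ A, ∑ m, w i m * (X n m * z n) := Finset.sum_comm
      _ = ∑ n ∈ A, (∑ m, w i m * X n m) * z n := by
          refine Finset.sum_congr rfl fun n _ => ?_
          rw [Finset.sum_mul]
          exact Finset.sum_congr rfl fun m _ => by ring
      _ = ∑ n ∈ A, σ i * e i n * z n := by
          exact Finset.sum_congr rfl fun n _ => by rw [hwX i n]
  -- abbreviations
  set CR : ℝ := (N.choose B : ℝ) with hCRdef
  have hCR0 : CR ≠ 0 := by
    rw [hCRdef]
    exact_mod_cast hCNBpos.ne'
  set c1 : ℝ := CR * (B:ℝ) / (N:ℝ) with hc1def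
  set c2 : ℝ := CR * ((B:ℝ) * ((B:ℝ) - 1)) / ((N:ℝ) * ((N:ℝ) - 1)) with hc2def
  set P := Finset.powersetCard B (Finset.univ : Finset (Fin N)) with hPdef
  set α : Fin r → Fin N → ℝ := fun i n => σ i * e i n * z n with hαdef
  set F : Fin r → ℝ := fun i => ∑ n, α i n with hFdef
  set βf : Fin N → ℝ := fun n => z n * (∑ m, X n m * u m) with hβdef
  set G : ℝ := ∑ n, βf n with hGdef
  set Qd : ℝ := ∑ i, ∑ n, (α i n) ^ 2 with hQddef
  set Qb : ℝ := ∑ n, (βf n) ^ 2 with hQbdef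
  set Sf : Finset (Fin N) → Fin r → ℝ := fun A i => ∑ n ∈ A, α i n with hSdef
  set Tf : Finset (Fin N) → ℝ := fun A => ∑ n ∈ A, βf n with hTdef
  have hβα : ∀ n, βf n = ∑ i, o i * α i n := by
    intro n
    simp only [hβdef, hαdef]
    rw [hXu n, Finset.mul_sum]
    exact Finset.sum_congr rfl fun j _ => by ring
  have hT : ∀ A, Tf A = ∑ i, o i * Sf A i := by
    intro A
    simp only [hTdef, hSdef]
    calc ∑ n ∈ A, βf n = ∑ n ∈ A, ∑ i, o i * α i n := Finset.sum_congr rfl fun n _ => hβα n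
      _ = ∑ i, ∑ n ∈ A, o i * α i n := Finset.sum_comm
      _ = ∑ i, o i * ∑ n ∈ A, α i n :=
          Finset.sum_congr rfl fun i _ => (Finset.mul_sum _ _ _).symm
  have hGF : G = ∑ i, o i * F i := by
    simp only [hGdef, hFdef]
    calc ∑ n, βf n = ∑ n, ∑ i, o i * α i n := Finset.sum_congr rfl fun n _ => hβα n
      _ = ∑ i, ∑ n, o i * α i n := Finset.sum_comm
      _ = ∑ i, o i * ∑ n, α i n :=
          Finset.sum_congr rfl fun i _ => (Finset.mul_sum _ _ _).symm
  -- GD step values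
  have hwuGD : ∀ i, ∑ m, w i m * uGD m = o i - (η / (N:ℝ)) * v * F i := by
    intro i
    have h1 : ∀ m, w i m * uGD m
        = w i m * u m - (η / (N:ℝ)) * v * (w i m * (∑ n, X n m * z n)) := by
      intro m; rw [huGD m]; ring
    rw [Finset.sum_congr rfl fun m _ => h1 m, Finset.sum_sub_distrib, ← Finset.mul_sum,
      hsum2 i Finset.univ, ← ho]
    try simp only [hFdef, hαdef]
  have hvGDG : vGD = v - (η / (N:ℝ)) * G := by
    rw [hvGD]
    try simp only [hGdef, hβdef]
  -- SGD step values
  have hwuS : ∀ ω i, ∑ m, w i m * uS ω m = o i - (η / (B:ℝ)) * v * Sf (s ω) i := by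
    intro ω i
    have h1 : ∀ m, w i m * uS ω m
        = w i m * u m - (η / (B:ℝ)) * v * (w i m * (∑ n ∈ s ω, X n m * z n)) := by
      intro m
      rw [huS ω m,
        show (∑ n, if n ∈ s ω then X n m * z n else 0) = ∑ n ∈ s ω, X n m * z n by
          rw [Finset.sum_ite_mem, Finset.univ_inter]]
      ring
    rw [Finset.sum_congr rfl fun m _ => h1 m, Finset.sum_sub_distrib, ← Finset.mul_sum,
      hsum2 i (s ω), ← ho]
    try simp only [hSdef, hαdef]
  have hvST : ∀ ω, vS ω = v - (η / (B:ℝ)) * Tf (s ω) := by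
    intro ω
    rw [hvS ω,
      show (∑ n, if n ∈ s ω then z n * (∑ m, X n m * u m) else 0)
          = ∑ n ∈ s ω, z n * (∑ m, X n m * u m) by
        rw [Finset.sum_ite_mem, Finset.univ_inter]]
    try simp only [hTdef, hβdef]
  -- expansion of imbalance after a step
  have expand : ∀ (c : ℝ) (Sv : Fin r → ℝ) (Tv : ℝ), Tv = ∑ i, o i * Sv i →
      ((∑ i, (o i - c * v * Sv i) ^ 2) - (v - c * Tv) ^ 2)
        = Cθ + c ^ 2 * (v ^ 2 * (∑ i, (Sv i) ^ 2) - Tv ^ 2) := by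
    intro c Sv Tv hTv
    have h1 : (∑ i, (o i - c * v * Sv i) ^ 2)
        = (∑ i, o i ^ 2) - (∑ i, 2 * c * v * (o i * Sv i))
          + (∑ i, c ^ 2 * v ^ 2 * (Sv i) ^ 2) := by
      rw [← Finset.sum_sub_distrib, ← Finset.sum_add_distrib]
      exact Finset.sum_congr rfl fun i _ => by ring
    rw [h1, ← Finset.mul_sum, ← Finset.mul_sum, hCθ, hTv]
    ring
  set g : Finset (Fin N) → ℝ :=
    fun A => Cθ + (η / (B:ℝ)) ^ 2 * (v ^ 2 * (∑ i, (Sf A i) ^ 2) - (Tf A) ^ 2) with hgdef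
  have hInt : ∀ ω, ((∑ i, (∑ m, w i m * uS ω m) ^ 2) - vS ω ^ 2) = g (s ω) := by
    intro ω
    have h2 : (∑ i, (∑ m, w i m * uS ω m) ^ 2)
        = ∑ i, (o i - (η / (B:ℝ)) * v * Sf (s ω) i) ^ 2 :=
      Finset.sum_congr rfl fun i _ => by rw [hwuS ω i]
    rw [h2, hvST ω]
    exact expand (η / (B:ℝ)) (Sf (s ω)) (Tf (s ω)) (hT (s ω))
  have hGDval : ((∑ i, (∑ m, w i m * uGD m) ^ 2) - vGD ^ 2)
      = Cθ + (η / (N:ℝ)) ^ 2 * (v ^ 2 * (∑ i, (F i) ^ 2) - G ^ 2) := by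
    have h2 : (∑ i, (∑ m, w i m * uGD m) ^ 2) = ∑ i, (o i - (η / (N:ℝ)) * v * F i) ^ 2 :=
      Finset.sum_congr rfl fun i _ => by rw [hwuGD i]
    rw [h2, hvGDG]
    exact expand (η / (N:ℝ)) F G hGF
  -- the integral as a finite sum
  have hIntegral : (∫ ω, ((∑ i, (∑ m, w i m * uS ω m) ^ 2) - vS ω ^ 2) ∂μ)
      = ∑ A : Finset (Fin N), (μ {ω | s ω = A}).toReal * g A := by
    rw [integral_congr_ae (Filter.Eventually.of_forall hInt)]
    exact integral_comp_fintype μ s hmeasA g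
  have hfib : ∀ A : Finset (Fin N), A ∉ P → {ω | s ω = A} = ∅ := by
    intro A hA
    ext ω
    simp only [Set.mem_setOf_eq, Set.mem_empty_iff_false, iff_false]
    intro h
    exact hA (by rw [hPdef, Finset.mem_powersetCard_univ, ← h]; exact hcard ω)
  have htoReal : (((N.choose B : ℝ≥0∞))⁻¹).toReal = CR⁻¹ := by
    rw [ENNReal.toReal_inv, hCRdef]
    simp
  have hsplit : (∑ A : Finset (Fin N), (μ {ω | s ω = A}).toReal * g A)
      = ∑ A ∈ P, CR⁻¹ * g A := by
    have hvan : ∀ A ∈ (Finset.univ : Finset (Finset (Fin N))), A ∉ P →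
        (μ {ω | s ω = A}).toReal * g A = 0 := by
      intro A _ hA
      rw [hfib A hA]
      simp
    rw [← Finset.sum_subset (Finset.subset_univ P) hvan]
    refine Finset.sum_congr rfl fun A hA => ?_
    have hAB : A.card = B := by
      rw [hPdef] at hA
      exact Finset.mem_powersetCard_univ.1 hA
    rw [hunif A hAB, htoReal]
  -- counting values
  have hc1R : ∀ n : Fin N, ((P.filter (fun A => n ∈ A ∧ n ∈ A)).card : ℝ) = c1 := by
    intro n
    have hfe : P.filter (fun A => n ∈ A ∧ n ∈ A) = P.filter (fun A => n ∈ A) := by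
      apply Finset.filter_congr
      intro A _
      simp
    rw [hfe, hPdef, count_single N B hB1 n, hc1def, eq_div_iff hN0]
    have hid := choose_id1 N B hB1 (by omega)
    have hidR : CR * (B:ℝ) = (N:ℝ) * (((N-1).choose (B-1) : ℕ) : ℝ) := by
      rw [hCRdef]
      exact_mod_cast hid
    linarith [hidR]
  have hc2R : ∀ n m : Fin N, n ≠ m →
      ((P.filter (fun A => n ∈ A ∧ m ∈ A)).card : ℝ) = c2 := by
    intro n m hnm
    have hid := count_pair_eq N B hN hB1 hBN n m hnm
    rw [← hPdef] at hid
    have h1 : ((N - 1 : ℕ) : ℝ) = (N : ℝ) - 1 := by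
      rw [Nat.cast_sub (by omega : 1 ≤ N)]
      norm_num
    have h2 : ((B - 1 : ℕ) : ℝ) = (B : ℝ) - 1 := by
      rw [Nat.cast_sub hB1]
      norm_num
    have h3 := congrArg (fun k : ℕ => (k : ℝ)) hid
    push_cast at h3
    rw [hc2def, hCRdef, eq_div_iff (mul_ne_zero hN0 hN1)]
    rw [h1, h2] at h3
    linarith [h3]
  -- the second-moment sums over the random batch
  have pairsum : ∀ p q : Fin N → ℝ,
      (∑ A ∈ P, (∑ n ∈ A, p n) * (∑ m ∈ A, q m))
        = c2 * ((∑ n, p n) * (∑ n, q n)) + (c1 - c2) * (∑ n, p n * q n) := by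
    intro p q
    rw [hPdef, sum_powersetCard_mul N B p q]
    have hterm : ∀ n m : Fin N,
        ((((Finset.powersetCard B (Finset.univ : Finset (Fin N)))).filter
            (fun A => n ∈ A ∧ m ∈ A)).card : ℝ) * (p n * q m)
          = c2 * (p n * q m) + (if n = m then (c1 - c2) * (p n * q n) else 0) := by
      intro n m
      by_cases h : n = m
      · subst h
        rw [show ((((Finset.powersetCard B (Finset.univ : Finset (Fin N)))).filter
            (fun A => n ∈ A ∧ n ∈ A)).card : ℝ) = c1 from by rw [← hPdef]; exact hc1R n,
          if_pos rfl]
        ring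
      · rw [show ((((Finset.powersetCard B (Finset.univ : Finset (Fin N)))).filter
            (fun A => n ∈ A ∧ m ∈ A)).card : ℝ) = c2 from by rw [← hPdef]; exact hc2R n m h,
          if_neg h]
        ring
    rw [Finset.sum_congr rfl fun n (_ : n ∈ Finset.univ) =>
      Finset.sum_congr rfl fun m (_ : m ∈ Finset.univ) => hterm n m]
    have h5 : ∀ n : Fin N,
        (∑ m, (c2 * (p n * q m) + (if n = m then (c1 - c2) * (p n * q n) else 0)))
          = c2 * (p n * ∑ m, q m) + (c1 - c2) * (p n * q n) := by
      intro n
      rw [Finset.sum_add_distrib]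
      congr 1
      · rw [← Finset.mul_sum, ← Finset.mul_sum]
      · rw [Finset.sum_ite_eq]
        simp
    rw [Finset.sum_congr rfl fun n (_ : n ∈ Finset.univ) => h5 n, Finset.sum_add_distrib,
      ← Finset.mul_sum, ← Finset.mul_sum, ← Finset.sum_mul]
  have hSsq : (∑ A ∈ P, ∑ i, (Sf A i) ^ 2)
      = c2 * (∑ i, (F i) ^ 2) + (c1 - c2) * Qd := by
    rw [Finset.sum_comm]
    have hi : ∀ i : Fin r, (∑ A ∈ P, (Sf A i) ^ 2)
        = c2 * ((F i) * (F i)) + (c1 - c2) * (∑ n, α i n * α i n) := by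
      intro i
      have h0 : ∀ A ∈ P, (Sf A i) ^ 2 = (∑ n ∈ A, α i n) * (∑ n ∈ A, α i n) := by
        intro A _
        simp only [hSdef, pow_two]
      rw [Finset.sum_congr rfl h0, pairsum (α i) (α i), hFdef]
    rw [Finset.sum_congr rfl fun i (_ : i ∈ Finset.univ) => hi i, Finset.sum_add_distrib,
      ← Finset.mul_sum, ← Finset.mul_sum]
    congr 2
    · exact Finset.sum_congr rfl fun i _ => (pow_two (F i)).symm
    · rw [hQddef]
      exact Finset.sum_congr rfl fun i _ =>
        Finset.sum_congr rfl fun n _ => (pow_two (α i n)).symm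
  have hTsq : (∑ A ∈ P, (Tf A) ^ 2) = c2 * G ^ 2 + (c1 - c2) * Qb := by
    have h0 : ∀ A ∈ P, (Tf A) ^ 2 = (∑ n ∈ A, βf n) * (∑ n ∈ A, βf n) := by
      intro A _
      simp only [hTdef, pow_two]
    rw [Finset.sum_congr rfl h0, pairsum βf βf, hGdef, hQbdef, pow_two]
    congr 2
    exact Finset.sum_congr rfl fun n _ => (pow_two (βf n)).symm
  have hPcard : ((P.card : ℕ) : ℝ) = CR := by
    rw [hPdef, Finset.card_powersetCard, Finset.card_univ, Fintype.card_fin, hCRdef]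
  -- rewrite Ψ and Ω in terms of the abbreviations
  have hFσ : ∀ i, F i = σ i * (∑ n, z n * e i n) := by
    intro i
    simp only [hFdef, hαdef]
    rw [Finset.mul_sum]
    exact Finset.sum_congr rfl fun n _ => by ring
  have hΨ₁F : Ψ₁ = ∑ i, (F i) ^ 2 := by
    rw [hΨ₁]
    refine Finset.sum_congr rfl fun i _ => ?_
    rw [hFσ i]
    ring
  have hΨ₂Q : Ψ₂ = (N:ℝ) * Qd := by
    rw [hΨ₂, hQddef]
    congr 1
    refine Finset.sum_congr rfl fun i _ => ?_
    rw [Finset.mul_sum]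
    refine Finset.sum_congr rfl fun n _ => ?_
    simp only [hαdef]
    ring
  have hGFc : (∑ i, F i * o i) = G := by
    rw [hGF]
    exact Finset.sum_congr rfl fun i _ => by ring
  have hΩ₁L : Ω₁ = (∑ i, (F i) ^ 2) * (∑ i, o i ^ 2) - G ^ 2 := by
    rw [hΩ₁]
    have h1 : ∀ i j : Fin r,
        (if i < j then (σ i * (∑ n, z n * e i n) * o j
            - σ j * (∑ n, z n * e j n) * o i) ^ 2 else 0)
          = (if i < j then (F i * o j - F j * o i) ^ 2 else 0) := by
      intro i j
      rw [hFσ i, hFσ j]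
    rw [Finset.sum_congr rfl fun i (_ : i ∈ Finset.univ) =>
      Finset.sum_congr rfl fun j (_ : j ∈ Finset.univ) => h1 i j]
    rw [lagrange_id F o, hGFc]
  have hΩ₂L : Ω₂ = (N:ℝ) * (Qd * (∑ i, o i ^ 2) - Qb) := by
    rw [hΩ₂]
    congr 1
    have h1 : ∀ i j : Fin r,
        (if i < j then (∑ n, (σ i * (z n * e i n) * o j
            - σ j * (z n * e j n) * o i) ^ 2) else 0)
          = ∑ n, (if i < j then (α i n * o j - α j n * o i) ^ 2 else 0) := by
      intro i j
      by_cases h : i < j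
      · simp only [if_pos h]
        refine Finset.sum_congr rfl fun n _ => ?_
        simp only [hαdef]
        ring
      · simp only [if_neg h, Finset.sum_const_zero]
    rw [Finset.sum_congr rfl fun i (_ : i ∈ Finset.univ) =>
      Finset.sum_congr rfl fun j (_ : j ∈ Finset.univ) => h1 i j]
    rw [Finset.sum_congr rfl fun i (_ : i ∈ Finset.univ) => Finset.sum_comm, Finset.sum_comm]
    have h2 : ∀ n : Fin N,
        (∑ i, ∑ j, (if i < j then (α i n * o j - α j n * o i) ^ 2 else 0))
          = (∑ i, (α i n) ^ 2) * (∑ i, o i ^ 2) - (βf n) ^ 2 := by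
      intro n
      rw [lagrange_id (fun i => α i n) o]
      congr 1
      rw [hβα n]
      congr 1
      exact Finset.sum_congr rfl fun i _ => by ring
    rw [Finset.sum_congr rfl fun n (_ : n ∈ Finset.univ) => h2 n, Finset.sum_sub_distrib,
      ← Finset.sum_mul, ← hQbdef]
    congr 2
    rw [hQddef]
    exact Finset.sum_comm
  -- assemble everything
  rw [hIntegral, hsplit, hGDval, ← Finset.mul_sum]
  have hsumg : (∑ A ∈ P, g A)
      = CR * Cθ + (η / (B:ℝ)) ^ 2 * (v ^ 2 * (c2 * (∑ i, (F i) ^ 2) + (c1 - c2) * Qd)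
          - (c2 * G ^ 2 + (c1 - c2) * Qb)) := by
    simp only [hgdef]
    rw [Finset.sum_add_distrib, Finset.sum_const, nsmul_eq_mul, hPcard]
    congr 1
    rw [show (∑ A ∈ P, (η / (B:ℝ)) ^ 2 * (v ^ 2 * (∑ i, (Sf A i) ^ 2) - (Tf A) ^ 2))
        = (η / (B:ℝ)) ^ 2 * ∑ A ∈ P, (v ^ 2 * (∑ i, (Sf A i) ^ 2) - (Tf A) ^ 2) from
      (Finset.mul_sum _ _ _).symm]
    rw [Finset.sum_sub_distrib]
    rw [show (∑ A ∈ P, v ^ 2 * (∑ i, (Sf A i) ^ 2)) = v ^ 2 * ∑ A ∈ P, ∑ i, (Sf A i) ^ 2 from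
      (Finset.mul_sum _ _ _).symm]
    rw [hSsq, hTsq]
  rw [hsumg, hΨ₂Q, hΨ₁F, hΩ₁L, hΩ₂L, hCθ, hc2def, hc1def]
  field_simp
  ring
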